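/- Suppose that for all i ∈ {1,…,m} and all u ∈ ℝⁿ the limit C_i(u) := lim_{t→∞} f_i(t H_i u)/t exists and is finite, and that for every nonzero u ∈ ℝⁿ and every index set I ⊆ {1,…,m} with |I| = p one has Σ_{i∈I} C_i(u) < Σ_{i∉I} C_i(u). Then for every z = (z_1,…,z_m) there exists β ≥ 0 such that for every (p,m)-sparse attack a, every u ∈ ℝⁿ with ‖u‖ = 1, and every t ≥ β, writing y_i = z_i + a_i, one has Σ_{i=1}^m f_i(y_i − t H_i u) < Σ_{i=1}^m f_i(y_i − (t+1) H_i u). -/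

import Mathlib

open Filter Set

section Aux
variable {V : Type*} [NormedAddCommGroup V] [NormedSpace ℝ V]

private lemma midpoint_ineq {g : V → ℝ} (hg : ConvexOn ℝ Set.univ g) (x y : V) :
    g ((1/2 : ℝ) • x + (1/2 : ℝ) • y) ≤ (1/2) * g x + (1/2) * g y :=
  hg.2 (mem_univ x) (mem_univ y) (by norm_num) (by norm_num) (by norm_num)

/-- increments along integer steps are at least the first increment -/
private lemma incr_ge {g : V → ℝ} (hg : ConvexOn ℝ Set.univ g) (x v : V) :
    ∀ k : ℕ, g (x + v) - g x ≤ g (x + ((k : ℝ) + 1) • v) - g (x + (k : ℝ) • v) := by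
  intro k
  induction k with
  | zero => simp
  | succ k ih =>
    have hm := midpoint_ineq hg (x + (k : ℝ) • v) (x + ((k : ℝ) + 1 + 1) • v)
    have he : (1/2 : ℝ) • (x + (k : ℝ) • v) + (1/2 : ℝ) • (x + ((k : ℝ) + 1 + 1) • v)
        = x + ((k : ℝ) + 1) • v := by module
    rw [he] at hm
    push_cast
    push_cast at ih
    linarith

private lemma lin_growth {g : V → ℝ} (hg : ConvexOn ℝ Set.univ g) (x v : V) :
    ∀ k : ℕ, g x + (k : ℝ) * (g (x + v) - g x) ≤ g (x + (k : ℝ) • v) := by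
  intro k
  induction k with
  | zero => simp
  | succ k ih =>
    have h := incr_ge hg x v k
    push_cast
    push_cast at ih
    linarith

private lemma step_le {g : V → ℝ} (hg : ConvexOn ℝ Set.univ g) {v : V} {Cv : ℝ}
    (hCv : Tendsto (fun t : ℝ => g (t • v) / t) atTop (nhds Cv)) (x : V) :
    g (x + v) ≤ g x + Cv := by
  have hD : g (x + v) - g x ≤ Cv := by
    have h1 : Tendsto (fun k : ℕ => (2 * (k : ℝ))) atTop atTop :=
      Tendsto.const_mul_atTop (by norm_num) tendsto_natCast_atTop_atTop
    have h2 : Tendsto (fun k : ℕ => g ((2 * (k : ℝ)) • v) / (2 * (k : ℝ))) atTop (nhds Cv) :=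
      hCv.comp h1
    have h3 : Tendsto (fun k : ℕ => (g ((2:ℝ) • x) / 2 - g x) / (k : ℝ)) atTop (nhds 0) :=
      tendsto_const_nhds.div_atTop tendsto_natCast_atTop_atTop
    have h4 : Tendsto (fun k : ℕ =>
        g ((2 * (k : ℝ)) • v) / (2 * (k : ℝ)) + (g ((2:ℝ) • x) / 2 - g x) / (k : ℝ))
        atTop (nhds Cv) := by
      simpa using h2.add h3
    refine ge_of_tendsto h4 ?_
    filter_upwards [eventually_ge_atTop 1] with k hk
    have hkpos : (0 : ℝ) < (k : ℝ) := by exact_mod_cast hk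
    have hlg := lin_growth hg x v k
    have hm := midpoint_ineq hg ((2:ℝ) • x) ((2 * (k : ℝ)) • v)
    have he : (1/2 : ℝ) • ((2:ℝ) • x) + (1/2 : ℝ) • ((2 * (k : ℝ)) • v)
        = x + (k : ℝ) • v := by module
    rw [he] at hm
    -- k * D ≤ g(2x)/2 + g((2k)v)/2 - g x
    have hb : (k : ℝ) * (g (x + v) - g x) ≤ g ((2:ℝ) • x) / 2 + g ((2 * (k : ℝ)) • v) / 2 - g x := by
      linarith
    rw [show g ((2 * (k : ℝ)) • v) / (2 * (k : ℝ)) + (g ((2:ℝ) • x) / 2 - g x) / (k : ℝ)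
      = (g ((2:ℝ) • x) / 2 + g ((2 * (k : ℝ)) • v) / 2 - g x) / (k : ℝ) by field_simp; ring,
      le_div_iff₀ hkpos]
    linarith
  linarith

private lemma step_le' {g : V → ℝ} (hg : ConvexOn ℝ Set.univ g) (hs : ∀ w, g w = g (-w))
    {v : V} {Cv : ℝ}
    (hCv : Tendsto (fun t : ℝ => g (t • v) / t) atTop (nhds Cv)) (x : V) :
    g (x - v) ≤ g x + Cv := by
  have hCv' : Tendsto (fun t : ℝ => g (t • (-v)) / t) atTop (nhds Cv) := by
    have : (fun t : ℝ => g (t • (-v)) / t) = fun t : ℝ => g (t • v) / t := by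
      funext t; rw [smul_neg, ← hs]
    rw [this]; exact hCv
  simpa [sub_eq_add_neg] using step_le hg hCv' x

/-- convexity of 1-d sections -/
private lemma incr_mono {h : ℝ → ℝ} (hh : ConvexOn ℝ Set.univ h) {s t : ℝ} (hst : s ≤ t) :
    h (s + 1) - h s ≤ h (t + 1) - h t := by
  rcases eq_or_lt_of_le hst with rfl | hlt
  · exact le_rfl
  · have h1 := hh.secant_mono (mem_univ s) (mem_univ (s+1)) (mem_univ (t+1))
      (by linarith) (by linarith) (by linarith)
    have h2 := hh.secant_mono (mem_univ (t+1)) (mem_univ s) (mem_univ t)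
      (by linarith) (by linarith) (by linarith)
    rw [show (s+1) - s = (1:ℝ) by ring, div_one] at h1
    have e2 : (h s - h (t+1)) / (s - (t+1)) = (h (t+1) - h s) / ((t+1) - s) := by
      rw [← neg_div_neg_eq]; congr 1 <;> ring
    have e3 : (h t - h (t+1)) / (t - (t+1)) = h (t+1) - h t := by
      rw [show t - (t+1) = (-1:ℝ) by ring, div_neg, div_one]; ring
    rw [e2, e3] at h2
    calc h (s+1) - h s ≤ (h (t+1) - h s) / ((t+1) - s) := h1
      _ ≤ h (t+1) - h t := h2

private lemma eventually_incr {g : V → ℝ} (hg : ConvexOn ℝ Set.univ g) (hs : ∀ w, g w = g (-w))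
    {v : V} {Cv : ℝ}
    (hCv : Tendsto (fun t : ℝ => g (t • v) / t) atTop (nhds Cv)) (z : V) {ε : ℝ} (hε : 0 < ε) :
    ∃ b : ℝ, 0 ≤ b ∧ Cv - ε < g (z - (b + 1) • v) - g (z - b • v) := by
  by_contra hcon
  push_neg at hcon
  have tel : ∀ k : ℕ, g (z - (k : ℝ) • v) ≤ g z + (k : ℝ) * (Cv - ε) := by
    intro k
    induction k with
    | zero => simp
    | succ k ih =>
      have h := hcon (k : ℝ) (by positivity)
      push_cast
      push_cast at ih
      linarith
  have lower : ∀ k : ℕ, 2 * g ((k : ℝ) • v) - g (-z) ≤ g (z - (2 * (k : ℝ)) • v) := by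
    intro k
    have hm := midpoint_ineq hg (z - (2 * (k : ℝ)) • v) (-z)
    have he : (1/2 : ℝ) • (z - (2 * (k : ℝ)) • v) + (1/2 : ℝ) • (-z) = -((k : ℝ) • v) := by
      module
    rw [he, ← hs] at hm
    linarith
  have hbd : ∀ᶠ k : ℕ in atTop,
      g ((k : ℝ) • v) / (k : ℝ) ≤ (g z + g (-z)) / (2 * (k : ℝ)) + (Cv - ε) := by
    filter_upwards [eventually_ge_atTop 1] with k hk
    have hkpos : (0 : ℝ) < (k : ℝ) := by exact_mod_cast hk
    have h1 := tel (2 * k)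
    push_cast at h1
    have h2 := lower k
    rw [div_le_iff₀ hkpos]
    have : (2 * (k : ℝ)) • v = ((2 : ℝ) * (k : ℝ)) • v := by norm_num
    rw [show ((g z + g (-z)) / (2 * (k : ℝ)) + (Cv - ε)) * (k:ℝ)
      = (g z + g (-z)) / 2 + (Cv - ε) * (k : ℝ) by field_simp]
    nlinarith
  have hl : Tendsto (fun k : ℕ => g ((k : ℝ) • v) / (k : ℝ)) atTop (nhds Cv) :=
    hCv.comp tendsto_natCast_atTop_atTop
  have hr : Tendsto (fun k : ℕ => (g z + g (-z)) / (2 * (k : ℝ)) + (Cv - ε)) atTop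
      (nhds (Cv - ε)) := by
    have : Tendsto (fun k : ℕ => (g z + g (-z)) / (2 * (k : ℝ))) atTop (nhds 0) :=
      tendsto_const_nhds.div_atTop (Tendsto.const_mul_atTop (by norm_num)
        tendsto_natCast_atTop_atTop)
    simpa using this.add tendsto_const_nhds
  have := le_of_tendsto_of_tendsto hl hr hbd
  linarith

end Aux

private lemma exists_uniform {E' : Type*} [TopologicalSpace E'] {S : Set E'} (hS : IsCompact S)
    {φ : ℝ → E' → ℝ} (hmono : ∀ u (s t : ℝ), s ≤ t → φ s u ≤ φ t u)
    (hcont : ∀ b : ℝ, Continuous (φ b))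
    (hpt : ∀ u ∈ S, ∃ b : ℝ, 0 < φ b u) :
    ∃ β : ℝ, ∀ u ∈ S, 0 < φ β u := by
  obtain ⟨T, hT⟩ := hS.elim_finite_subcover (fun b : ℝ => {u | 0 < φ b u})
    (fun b => isOpen_lt continuous_const (hcont b))
    (fun u hu => by obtain ⟨b, hb⟩ := hpt u hu; exact Set.mem_iUnion.2 ⟨b, hb⟩)
  refine ⟨(insert (0:ℝ) T).max' (Finset.insert_nonempty _ _), fun u hu => ?_⟩
  have hm := hT hu
  rw [Set.mem_iUnion₂] at hm
  obtain ⟨b, hbT, hb⟩ := hm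
  exact lt_of_lt_of_le hb (hmono u b _ (Finset.le_max' _ b (Finset.mem_insert_of_mem hbT)))

/-- Key step of Theorem 1: under the sufficient condition, for every `z` there
is a `β ≥ 0` such that for every `(p,m)`-sparse attack `a`, every unit vector
`u` and every `t ≥ β`, moving the candidate estimate from `t • u` to
`(t+1) • u` strictly increases the total cost. -/
theorem cost_strictly_increasing_far_away (n m p : ℕ) (hpm : p < m)
    (mi : Fin m → ℕ)
    (H : ∀ i : Fin m, Matrix (Fin (mi i)) (Fin n) ℝ)
    (f : ∀ i : Fin m, (Fin (mi i) → ℝ) → ℝ)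
    (hconv : ∀ i, ConvexOn ℝ Set.univ (f i))
    (hsym : ∀ i u, f i u = f i (-u))
    (hnonneg : ∀ i u, 0 ≤ f i u)
    (hzero : ∀ i, f i 0 = 0)
    (C : Fin m → EuclideanSpace ℝ (Fin n) → ℝ)
    (hC : ∀ (i : Fin m) (u : EuclideanSpace ℝ (Fin n)),
      Filter.Tendsto (fun t : ℝ => f i (t • (H i).mulVec u) / t) Filter.atTop (nhds (C i u)))
    (hmaj : ∀ u : EuclideanSpace ℝ (Fin n), u ≠ 0 →
      ∀ I : Finset (Fin m), I.card = p → ∑ i ∈ I, C i u < ∑ i ∈ Iᶜ, C i u)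
    (z : ∀ i : Fin m, Fin (mi i) → ℝ) :
    ∃ β : ℝ, 0 ≤ β ∧
      ∀ a : ∀ i : Fin m, Fin (mi i) → ℝ,
        (∃ I : Finset (Fin m), I.card ≤ p ∧ ∀ i ∉ I, a i = 0) →
        ∀ u : EuclideanSpace ℝ (Fin n), ‖u‖ = 1 → ∀ t : ℝ, β ≤ t →
          ∑ i, f i (z i + a i - t • (H i).mulVec u) <
            ∑ i, f i (z i + a i - (t + 1) • (H i).mulVec u) := by
  classical
  -- the measurement maps, as linear maps on Euclidean space
  set L : ∀ i : Fin m, EuclideanSpace ℝ (Fin n) →ₗ[ℝ] (Fin (mi i) → ℝ) :=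
    fun i => ((H i).mulVecLin).comp (WithLp.linearEquiv 2 ℝ (Fin n → ℝ)).toLinearMap with hLdef
  have hLv : ∀ (i : Fin m) (u : EuclideanSpace ℝ (Fin n)), (H i).mulVec u = L i u :=
    fun i u => rfl
  have hC' : ∀ (i : Fin m) (u : EuclideanSpace ℝ (Fin n)),
      Filter.Tendsto (fun t : ℝ => f i (t • L i u) / t) Filter.atTop (nhds (C i u)) :=
    fun i u => hC i u
  -- the one-step increments of the cost of sensor i in direction u
  set Δ : Fin m → ℝ → EuclideanSpace ℝ (Fin n) → ℝ :=
    fun i t u => f i (z i - (t + 1) • L i u) - f i (z i - t • L i u) with hΔdef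
  -- convexity and continuity of C i
  have hCconv : ∀ i, ConvexOn ℝ Set.univ (C i) := by
    intro i
    refine ⟨convex_univ, fun u _ w _ a b ha hb hab => ?_⟩
    have hlim2 : Filter.Tendsto (fun t : ℝ =>
        a * (f i (t • L i u) / t) + b * (f i (t • L i w) / t)) Filter.atTop
        (nhds (a * C i u + b * C i w)) := ((hC' i u).const_mul a).add ((hC' i w).const_mul b)
    refine le_of_tendsto_of_tendsto (hC' i (a • u + b • w)) hlim2 ?_
    filter_upwards [Filter.eventually_gt_atTop 0] with t htpos
    have hv : t • L i (a • u + b • w) = a • (t • L i u) + b • (t • L i w) := by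
      rw [map_add, map_smul, map_smul]; module
    have hcv : f i (t • L i (a • u + b • w)) ≤ a * f i (t • L i u) + b * f i (t • L i w) := by
      rw [hv]; exact (hconv i).2 (mem_univ _) (mem_univ _) ha hb hab
    have : f i (t • L i (a • u + b • w)) / t
        ≤ (a * f i (t • L i u) + b * f i (t • L i w)) / t :=
      div_le_div_of_nonneg_right hcv htpos.le
    calc f i (t • L i (a • u + b • w)) / t
        ≤ (a * f i (t • L i u) + b * f i (t • L i w)) / t := this
      _ = a * (f i (t • L i u) / t) + b * (f i (t • L i w) / t) := by ring
  have hCcont : ∀ i, Continuous (C i) := fun i => (hCconv i).locallyLipschitz.continuous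
  have hfcont : ∀ i, Continuous (f i) := fun i => (hconv i).locallyLipschitz.continuous
  -- one-step decrease is at most C i u
  have hstep : ∀ (i : Fin m) (u : EuclideanSpace ℝ (Fin n)) (x : Fin (mi i) → ℝ),
      f i (x + L i u) ≤ f i x + C i u := fun i u x => step_le (hconv i) (hC' i u) x
  -- convexity of the one-dimensional sections
  have hsconv : ∀ (i : Fin m) (u : EuclideanSpace ℝ (Fin n)),
      ConvexOn ℝ Set.univ (fun r : ℝ => f i (z i - r • L i u)) := by
    intro i u
    refine ⟨convex_univ, fun r _ s _ a b ha hb hab => ?_⟩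
    have he : z i - (a * r + b * s) • L i u
        = a • (z i - r • L i u) + b • (z i - s • L i u) := by
      have h2 : a • (z i - r • L i u) + b • (z i - s • L i u)
          = (a + b) • z i - (a * r + b * s) • L i u := by module
      rw [h2, hab, one_smul]
    simp only [smul_eq_mul]
    rw [he]
    exact (hconv i).2 (mem_univ _) (mem_univ _) ha hb hab
  have hΔmono : ∀ (i : Fin m) (u : EuclideanSpace ℝ (Fin n)) {s t : ℝ}, s ≤ t →
      Δ i s u ≤ Δ i t u := by
    intro i u s t hst
    simpa [hΔdef] using incr_mono (hsconv i u) hst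
  have hΔcont : ∀ (i : Fin m) (b : ℝ), Continuous fun u => Δ i b u := by
    intro i b
    have hLc : Continuous fun u : EuclideanSpace ℝ (Fin n) => L i u :=
      (L i).continuous_of_finiteDimensional
    exact ((hfcont i).comp (continuous_const.sub (hLc.const_smul (b + 1)))).sub
      ((hfcont i).comp (continuous_const.sub (hLc.const_smul b)))
  have hΔpt : ∀ (i : Fin m) (u : EuclideanSpace ℝ (Fin n)) {ε : ℝ}, 0 < ε →
      ∃ b : ℝ, 0 ≤ b ∧ C i u - ε < Δ i b u := by
    intro i u ε hε
    obtain ⟨b, hb0, hb⟩ := eventually_incr (hconv i) (hsym i) (hC' i u) (z i) hε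
    exact ⟨b, hb0, by simpa [hΔdef] using hb⟩
  -- for each index set I of cardinality p, a uniform threshold over the sphere
  have key : ∀ I : Finset (Fin m), I.card = p →
      ∃ b : ℝ, ∀ u : EuclideanSpace ℝ (Fin n), ‖u‖ = 1 →
        0 < (∑ i ∈ Iᶜ, Δ i b u) - ∑ i ∈ I, C i u := by
    intro I hI
    have hS : IsCompact (Metric.sphere (0 : EuclideanSpace ℝ (Fin n)) 1) :=
      isCompact_sphere 0 1
    obtain ⟨b, hb⟩ := exists_uniform hS
      (φ := fun b u => (∑ i ∈ Iᶜ, Δ i b u) - ∑ i ∈ I, C i u)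
      (fun u s t hst => sub_le_sub_right (Finset.sum_le_sum fun i _ => hΔmono i u hst) _)
      (fun b => ((continuous_finset_sum _ fun i _ => hΔcont i b)).sub
        (continuous_finset_sum _ fun i _ => hCcont i))
      (by
        intro u hu
        have hu1 : ‖u‖ = 1 := by simpa using hu
        have hune : u ≠ 0 := by
          intro h; rw [h] at hu1; simp at hu1
        have hgap := hmaj u hune I hI
        have hGpos : 0 < (∑ i ∈ Iᶜ, C i u) - ∑ i ∈ I, C i u := by linarith
        set G : ℝ := (∑ i ∈ Iᶜ, C i u) - ∑ i ∈ I, C i u with hG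
        set ε : ℝ := G / (m + 1) with hεdef
        have hεpos : 0 < ε := by positivity
        choose bfun hbfun0 hbfun using fun i : Fin m => hΔpt i u hεpos
        refine ⟨(insert (0:ℝ) (Finset.univ.image bfun)).max' (Finset.insert_nonempty _ _), ?_⟩
        set b := (insert (0:ℝ) (Finset.univ.image bfun)).max' (Finset.insert_nonempty _ _)
          with hbdef
        have hble : ∀ i, bfun i ≤ b := fun i => Finset.le_max' _ _
          (Finset.mem_insert_of_mem (Finset.mem_image_of_mem _ (Finset.mem_univ i)))
        have h2 : ∑ i ∈ Iᶜ, (C i u - ε) ≤ ∑ i ∈ Iᶜ, Δ i b u :=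
          Finset.sum_le_sum fun i _ =>
            le_of_lt (lt_of_lt_of_le (hbfun i) (hΔmono i u (hble i)))
        have h3 : ∑ i ∈ Iᶜ, (C i u - ε) = (∑ i ∈ Iᶜ, C i u) - (Iᶜ.card : ℝ) * ε := by
          rw [Finset.sum_sub_distrib, Finset.sum_const, nsmul_eq_mul]
        have hcard : ((Iᶜ.card : ℕ) : ℝ) ≤ (m : ℝ) := by
          have h4 : (Iᶜ : Finset (Fin m)).card ≤ m := by
            simpa using Finset.card_le_univ (Iᶜ : Finset (Fin m))
          exact_mod_cast h4
        have hGe : G = ((m : ℝ) + 1) * ε := by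
          rw [hεdef]; field_simp
        show 0 < (∑ i ∈ Iᶜ, Δ i b u) - ∑ i ∈ I, C i u
        nlinarith [h2, h3, hcard, hεpos, hGe])
    exact ⟨b, fun u hu => hb u (by simpa using hu)⟩
  choose! B hB using key
  set PP : Finset (Finset (Fin m)) := Finset.powersetCard p Finset.univ with hPP
  refine ⟨(insert (0:ℝ) (PP.image B)).max' (Finset.insert_nonempty _ _),
    Finset.le_max' _ _ (Finset.mem_insert_self _ _), ?_⟩
  set β := (insert (0:ℝ) (PP.image B)).max' (Finset.insert_nonempty _ _) with hβdef
  rintro a ⟨I₀, hI₀p, hsupp⟩ u hu t ht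
  obtain ⟨I, hI₀I, -, hIp⟩ := Finset.exists_subsuperset_card_eq (Finset.subset_univ I₀) hI₀p
    (by simpa using hpm.le)
  have hBβ : B I ≤ β := Finset.le_max' _ _ (Finset.mem_insert_of_mem
    (Finset.mem_image_of_mem B (Finset.mem_powersetCard_univ.2 hIp)))
  have hkey := hB I hIp u hu
  have hA : ∀ i ∈ I, f i (z i + a i - t • L i u) ≤ f i (z i + a i - (t + 1) • L i u) + C i u := by
    intro i _
    have h := hstep i u (z i + a i - (t + 1) • L i u)
    have he : z i + a i - (t + 1) • L i u + L i u = z i + a i - t • L i u := by module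
    rwa [he] at h
  have hB2 : ∀ i ∈ Iᶜ,
      f i (z i + a i - t • L i u) = f i (z i + a i - (t + 1) • L i u) - Δ i t u := by
    intro i hi
    have hai : a i = 0 := hsupp i (fun hmem => (Finset.mem_compl.1 hi) (hI₀I hmem))
    rw [hai]
    simp only [add_zero, hΔdef]
    ring
  have hΔsum : ∑ i ∈ Iᶜ, Δ i (B I) u ≤ ∑ i ∈ Iᶜ, Δ i t u :=
    Finset.sum_le_sum fun i _ => hΔmono i u (le_trans hBβ ht)
  show ∑ i, f i (z i + a i - t • L i u) < ∑ i, f i (z i + a i - (t + 1) • L i u)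
  calc ∑ i, f i (z i + a i - t • L i u)
      = (∑ i ∈ I, f i (z i + a i - t • L i u)) + ∑ i ∈ Iᶜ, f i (z i + a i - t • L i u) :=
        (Finset.sum_add_sum_compl I _).symm
    _ ≤ (∑ i ∈ I, (f i (z i + a i - (t + 1) • L i u) + C i u))
        + ∑ i ∈ Iᶜ, (f i (z i + a i - (t + 1) • L i u) - Δ i t u) :=
        add_le_add (Finset.sum_le_sum hA) (le_of_eq (Finset.sum_congr rfl hB2))
    _ = (∑ i ∈ I, f i (z i + a i - (t + 1) • L i u))
        + (∑ i ∈ Iᶜ, f i (z i + a i - (t + 1) • L i u))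
        + ((∑ i ∈ I, C i u) - ∑ i ∈ Iᶜ, Δ i t u) := by
        rw [Finset.sum_add_distrib, Finset.sum_sub_distrib]; ring
    _ < (∑ i ∈ I, f i (z i + a i - (t + 1) • L i u))
        + (∑ i ∈ Iᶜ, f i (z i + a i - (t + 1) • L i u)) := by
        have hlt : (∑ i ∈ I, C i u) < ∑ i ∈ Iᶜ, Δ i t u :=
          lt_of_lt_of_le (by linarith) hΔsum
        linarith
    _ = ∑ i, f i (z i + a i - (t + 1) • L i u) := Finset.sum_add_sum_compl I _
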